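/- Let W = W⁺ ⊕ W⁻ be a finite-dimensional ℤ/2-graded complex inner product space and D an odd self-adjoint operator on W (i.e. D maps W± to W∓ and D* = D). Then the function t ↦ Str(e^{−tD²}) is constant on (0,∞), and its value equals the index dim ker(D|_{W⁺}) − dim ker(D|_{W⁻}) (McKean–Singer formula in finite dimensions). -/

import Mathlib

open Matrix Module

/-- finite-dimensional McKean–Singer: Let `W = W⁺ ⊕ W⁻` be a
finite-dimensional `ℤ/2`-graded complex inner product space, realized as `ℂ^k` with
Hermitian grading operator `ε` satisfying `ε² = 1` (so `W± = ker(ε ∓ 1)`), and let `D`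
be an odd (`εD = −Dε`) self-adjoint (Hermitian) operator. Then `t ↦ Str(e^{−tD²})` is
constant on `(0,∞)` and equals the index `dim ker(D|_{W⁺}) − dim ker(D|_{W⁻})`. -/
theorem mckean_singer_finite_dim (k : ℕ) (ε D : Matrix (Fin k) (Fin k) ℂ)
    (hεH : ε.IsHermitian) (hε : ε * ε = 1) (hD : D.IsHermitian)
    (hodd : ε * D = -(D * ε)) :
    ∀ t : ℝ, 0 < t →
      (ε * NormedSpace.exp ((-t : ℂ) • (D * D))).trace
        = ((finrank ℂ ↥(LinearMap.ker (Matrix.mulVecLin D) ⊓ LinearMap.ker (Matrix.mulVecLin (ε - 1))) : ℕ) : ℂ)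
          - ((finrank ℂ ↥(LinearMap.ker (Matrix.mulVecLin D) ⊓ LinearMap.ker (Matrix.mulVecLin (ε + 1))) : ℕ) : ℂ) := by
  intro t ht
  classical
  set U : Matrix (Fin k) (Fin k) ℂ := (hD.eigenvectorUnitary : Matrix (Fin k) (Fin k) ℂ) with hUdef
  have hU1 : star U * U = 1 := Matrix.mem_unitaryGroup_iff'.mp hD.eigenvectorUnitary.2
  have hU2 : U * star U = 1 := Matrix.mem_unitaryGroup_iff.mp hD.eigenvectorUnitary.2
  set lam : Fin k → ℝ := hD.eigenvalues with hlam
  set Λ : Matrix (Fin k) (Fin k) ℂ := diagonal (RCLike.ofReal ∘ lam) with hΛ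
  have hspec : D = U * Λ * star U := hD.spectral_theorem
  set F : Matrix (Fin k) (Fin k) ℂ := star U * ε * U with hF
  have hεF : ε = U * F * star U := by
    rw [hF]
    calc ε = (U * star U) * ε * (U * star U) := by rw [hU2, one_mul, mul_one]
    _ = U * (star U * ε * U) * star U := by noncomm_ring
  have hanti : F * Λ = -(Λ * F) := by
    have h := congrArg (fun X => star U * X * U) hodd
    simp only [hspec] at h
    simp only [Matrix.mul_assoc, Matrix.neg_mul, Matrix.mul_neg] at h ⊢
    rw [hU1] at h
    simp only [Matrix.mul_one, Matrix.one_mul] at h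
    rw [← Matrix.mul_assoc (star U) U, hU1, Matrix.one_mul] at h
    simpa only [hF, Matrix.mul_assoc] using h
    -- inspect

  have hentry : ∀ i j, F i j * (lam j : ℂ) = -((lam i : ℂ) * F i j) := by
    intro i j
    have h := congrFun (congrFun hanti i) j
    simpa [hΛ, Matrix.mul_diagonal, Matrix.diagonal_mul] using h
  have hFdiag : ∀ i, lam i ≠ 0 → F i i = 0 := by
    intro i hi
    have h := hentry i i
    have h2 : (2 : ℂ) * (lam i : ℂ) * F i i = 0 := by linear_combination h
    have hne : (2 : ℂ) * (lam i : ℂ) ≠ 0 :=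
      mul_ne_zero two_ne_zero (by exact_mod_cast hi)
    exact (mul_eq_zero.mp h2).resolve_left hne
  have hFoff : ∀ i j, (lam i = 0 ↔ ¬ lam j = 0) → F i j = 0 := by
    intro i j hij
    have h := hentry i j
    by_cases hi : lam i = 0
    · have hj := hij.mp hi
      have hjc : (lam j : ℂ) ≠ 0 := by exact_mod_cast hj
      rw [hi] at h
      simp at h
      rcases h with h | h
      · exact h
      · exact absurd h (by exact_mod_cast hjc)
    · have hj : lam j = 0 := by by_contra hj; exact hi (hij.mpr hj)
      rw [hj] at h
      simp at h
      rcases h with h | h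
      · exact absurd h hi
      · exact h
  set P : Matrix (Fin k) (Fin k) ℂ := diagonal (fun i => if lam i = 0 then (1:ℂ) else 0) with hP
  have hPP : P * P = P := by
    rw [hP, Matrix.diagonal_mul_diagonal]
    ext i j
    rcases eq_or_ne i j with rfl | hij
    · by_cases h : lam i = 0 <;> simp [h]
    · simp [Matrix.diagonal_apply_ne _ hij]
  have hΛP : Λ * P = 0 := by
    rw [hΛ, hP, Matrix.diagonal_mul_diagonal]
    ext i j
    rcases eq_or_ne i j with rfl | hij
    · by_cases h : lam i = 0 <;>
        simp [Matrix.diagonal_apply_eq, Function.comp, h]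
    · simp [Matrix.diagonal_apply_ne _ hij]
  have hFP : F * P = P * F := by
    ext i j
    simp only [Matrix.mul_diagonal, Matrix.diagonal_mul, hP]
    by_cases hi : lam i = 0 <;> by_cases hj : lam j = 0 <;> simp [hi, hj]
    · exact (hFoff i j (by simp [hi, hj])).symm
    · exact hFoff i j (by simp [hi, hj])
  set Q : Matrix (Fin k) (Fin k) ℂ := U * P * star U with hQ
  have hQ2 : Q * Q = Q := by
    rw [hQ]
    calc U * P * star U * (U * P * star U) = U * (P * (star U * U) * P) * star U := by noncomm_ring
    _ = U * P * star U := by rw [hU1, Matrix.mul_one, hPP]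
  have hεQ1 : ε * Q = U * (F * P) * star U := by
    rw [hεF, hQ]
    calc U * F * star U * (U * P * star U) = U * (F * (star U * U) * P) * star U := by
          noncomm_ring
    _ = U * (F * P) * star U := by rw [hU1, Matrix.mul_one]
  have hQε1 : Q * ε = U * (P * F) * star U := by
    rw [hεF, hQ]
    calc U * P * star U * (U * F * star U) = U * (P * (star U * U) * F) * star U := by
          noncomm_ring
    _ = U * (P * F) * star U := by rw [hU1, Matrix.mul_one]
  have hcomm : ε * Q = Q * ε := by rw [hεQ1, hQε1, hFP]
  have hDQ : D * Q = 0 := by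
    rw [hspec, hQ]
    calc U * Λ * star U * (U * P * star U) = U * (Λ * (star U * U) * P) * star U := by
          noncomm_ring
    _ = 0 := by rw [hU1, Matrix.mul_one, hΛP, Matrix.mul_zero, Matrix.zero_mul]
  have hodd' : D * ε = -(ε * D) := by rw [hodd, neg_neg]
  have hDεQ : D * (ε * Q) = 0 := by
    rw [← Matrix.mul_assoc, hodd', Matrix.neg_mul, Matrix.mul_assoc, hDQ,
      Matrix.mul_zero, neg_zero]
  have hsd : star U * D = Λ * star U := by
    rw [hspec]
    calc star U * (U * Λ * star U) = (star U * U) * (Λ * star U) := by noncomm_ring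
    _ = Λ * star U := by rw [hU1, Matrix.one_mul]
  have hQid : ∀ x : Fin k → ℂ, D *ᵥ x = 0 → Q *ᵥ x = x := by
    intro x hx
    have h1 : Λ *ᵥ (star U *ᵥ x) = 0 := by
      rw [Matrix.mulVec_mulVec, ← hsd, ← Matrix.mulVec_mulVec, hx, Matrix.mulVec_zero]
    have hy : ∀ i, (lam i : ℂ) * (star U *ᵥ x) i = 0 := by
      intro i
      have := congrFun h1 i
      simpa [hΛ, Matrix.mulVec_diagonal, Function.comp] using this
    have hPy : P *ᵥ (star U *ᵥ x) = star U *ᵥ x := by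
      funext i
      rw [hP, Matrix.mulVec_diagonal]
      by_cases h : lam i = 0
      · simp [h]
      · have : (lam i : ℂ) ≠ 0 := by exact_mod_cast h
        have h0 : (star U *ᵥ x) i = 0 := by
          rcases mul_eq_zero.mp (hy i) with h' | h'
          · exact absurd h' this
          · exact h'
        simp [h, h0]
    rw [hQ, ← Matrix.mulVec_mulVec, ← Matrix.mulVec_mulVec, hPy, Matrix.mulVec_mulVec,
      hU2, Matrix.one_mulVec]
  set Rp : Matrix (Fin k) (Fin k) ℂ := (2⁻¹ : ℂ) • (Q + ε * Q) with hRp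
  set Rm : Matrix (Fin k) (Fin k) ℂ := (2⁻¹ : ℂ) • (Q - ε * Q) with hRm
  have hDRp : D * Rp = 0 := by
    rw [hRp, Matrix.mul_smul, Matrix.mul_add, hDQ, hDεQ, add_zero, smul_zero]
  have hDRm : D * Rm = 0 := by
    rw [hRm, Matrix.mul_smul, Matrix.mul_sub, hDQ, hDεQ, sub_zero, smul_zero]
  have hεεQ : ε * (ε * Q) = Q := by
    calc ε * (ε * Q) = (ε * ε) * Q := by noncomm_ring
    _ = Q := by rw [hε, Matrix.one_mul]
  have hεRp : ε * Rp = Rp := by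
    rw [hRp, Matrix.mul_smul, Matrix.mul_add, hεεQ, add_comm]
  have hεRm : ε * Rm = -Rm := by
    rw [hRm, Matrix.mul_smul, Matrix.mul_sub, hεεQ, ← smul_neg, neg_sub]
  have hRpx : ∀ x : Fin k → ℂ, D *ᵥ x = 0 → ε *ᵥ x = x → Rp *ᵥ x = x := by
    intro x hx hex
    have hQx := hQid x hx
    rw [hRp, Matrix.smul_mulVec, Matrix.add_mulVec, hQx, ← Matrix.mulVec_mulVec, hQx, hex]
    module
  have hRmx : ∀ x : Fin k → ℂ, D *ᵥ x = 0 → ε *ᵥ x = -x → Rm *ᵥ x = x := by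
    intro x hx hex
    have hQx := hQid x hx
    rw [hRm, Matrix.smul_mulVec, Matrix.sub_mulVec, hQx, ← Matrix.mulVec_mulVec, hQx, hex]
    module
  set Sp := LinearMap.ker (Matrix.mulVecLin D) ⊓ LinearMap.ker (Matrix.mulVecLin (ε - 1)) with hSp
  set Sm := LinearMap.ker (Matrix.mulVecLin D) ⊓ LinearMap.ker (Matrix.mulVecLin (ε + 1)) with hSm
  have hprojp : LinearMap.IsProj Sp (Matrix.mulVecLin Rp) := by
    constructor
    · intro x
      rw [hSp, Submodule.mem_inf]
      constructor
      · rw [LinearMap.mem_ker, Matrix.mulVecLin_apply, Matrix.mulVecLin_apply,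
          Matrix.mulVec_mulVec, hDRp, Matrix.zero_mulVec]
      · rw [LinearMap.mem_ker, Matrix.mulVecLin_apply, Matrix.mulVecLin_apply,
          Matrix.mulVec_mulVec, Matrix.sub_mul, hεRp, Matrix.one_mul, sub_self,
          Matrix.zero_mulVec]
    · intro x hx
      rw [hSp, Submodule.mem_inf, LinearMap.mem_ker, LinearMap.mem_ker,
        Matrix.mulVecLin_apply, Matrix.mulVecLin_apply] at hx
      obtain ⟨hx1, hx2⟩ := hx
      have hex : ε *ᵥ x = x := by
        rw [Matrix.sub_mulVec, Matrix.one_mulVec, sub_eq_zero] at hx2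
        exact hx2
      rw [Matrix.mulVecLin_apply]
      exact hRpx x hx1 hex
  have hprojm : LinearMap.IsProj Sm (Matrix.mulVecLin Rm) := by
    constructor
    · intro x
      rw [hSm, Submodule.mem_inf]
      constructor
      · rw [LinearMap.mem_ker, Matrix.mulVecLin_apply, Matrix.mulVecLin_apply,
          Matrix.mulVec_mulVec, hDRm, Matrix.zero_mulVec]
      · rw [LinearMap.mem_ker, Matrix.mulVecLin_apply, Matrix.mulVecLin_apply,
          Matrix.mulVec_mulVec, Matrix.add_mul, hεRm, Matrix.one_mul, neg_add_cancel,
          Matrix.zero_mulVec]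
    · intro x hx
      rw [hSm, Submodule.mem_inf, LinearMap.mem_ker, LinearMap.mem_ker,
        Matrix.mulVecLin_apply, Matrix.mulVecLin_apply] at hx
      obtain ⟨hx1, hx2⟩ := hx
      have hex : ε *ᵥ x = -x := by
        rw [Matrix.add_mulVec, Matrix.one_mulVec, add_eq_zero_iff_eq_neg] at hx2
        exact hx2
      rw [Matrix.mulVecLin_apply]
      exact hRmx x hx1 hex
  have htr : ∀ M : Matrix (Fin k) (Fin k) ℂ,
      LinearMap.trace ℂ (Fin k → ℂ) (Matrix.mulVecLin M) = M.trace := by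
    intro M
    rw [LinearMap.trace_eq_matrix_trace ℂ (Pi.basisFun ℂ (Fin k)),
      LinearMap.toMatrix_eq_toMatrix', ← Matrix.toLin'_apply', LinearMap.toMatrix'_toLin']
  have htrp : Rp.trace = (finrank ℂ Sp : ℂ) := by rw [← htr Rp, hprojp.trace]
  have htrm : Rm.trace = (finrank ℂ Sm : ℂ) := by rw [← htr Rm, hprojm.trace]
  -- exponential computation
  have hiU : IsUnit U := ⟨⟨U, star U, hU2, hU1⟩, rfl⟩
  have hUinv : U⁻¹ = star U := Matrix.inv_eq_left_inv hU1
  have hexp : ∀ t : ℝ, NormedSpace.exp ((-t : ℂ) • (D * D)) =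
      U * diagonal (fun i => NormedSpace.exp ((-t : ℂ) * ((lam i : ℂ) * (lam i : ℂ)))) * star U := by
    intro t
    have hDD : (-t : ℂ) • (D * D) = U * ((-t : ℂ) • (Λ * Λ)) * star U := by
      rw [hspec]
      calc (-t : ℂ) • (U * Λ * star U * (U * Λ * star U))
          = (-t : ℂ) • (U * (Λ * (star U * U) * Λ) * star U) := by noncomm_ring
      _ = (-t : ℂ) • (U * (Λ * Λ) * star U) := by rw [hU1, Matrix.mul_one]
      _ = U * ((-t : ℂ) • (Λ * Λ)) * star U := by
          rw [Matrix.mul_smul, Matrix.smul_mul]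
    have hdiag : (-t : ℂ) • (Λ * Λ)
        = diagonal (fun i => (-t : ℂ) * ((lam i : ℂ) * (lam i : ℂ))) := by
      rw [hΛ, Matrix.diagonal_mul_diagonal]
      ext i j
      rcases eq_or_ne i j with rfl | hij
      · simp [Function.comp, smul_eq_mul]
      · simp [Matrix.diagonal_apply_ne _ hij]
    rw [hDD, hdiag, ← hUinv, Matrix.exp_conj U _ hiU, Matrix.exp_diagonal, hUinv, Pi.exp_def]
  have htrconj : ∀ Y : Matrix (Fin k) (Fin k) ℂ, (U * Y * star U).trace = Y.trace := by
    intro Y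
    rw [Matrix.mul_assoc, Matrix.trace_mul_comm, Matrix.mul_assoc, hU1, Matrix.mul_one]
  have hmain : ∀ g : Fin k → ℂ,
      ε * (U * diagonal g * star U) = U * (F * diagonal g) * star U := by
    intro g
    rw [hεF]
    calc U * F * star U * (U * diagonal g * star U)
        = U * (F * (star U * U) * diagonal g) * star U := by noncomm_ring
    _ = U * (F * diagonal g) * star U := by rw [hU1, Matrix.mul_one]
  have hFg : (F * diagonal (fun i =>
      NormedSpace.exp ((-t : ℂ) * ((lam i : ℂ) * (lam i : ℂ))))).trace = (F * P).trace := by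
    rw [Matrix.trace, Matrix.trace]
    apply Finset.sum_congr rfl
    intro i _
    rw [hP]
    simp only [Matrix.diag_apply, Matrix.mul_diagonal]
    by_cases h : lam i = 0
    · have h0 : ((-t : ℂ) * ((lam i : ℂ) * (lam i : ℂ))) = 0 := by rw [h]; simp
      rw [h0, NormedSpace.exp_zero]
      simp [h]
    · rw [hFdiag i h]
      simp
  have hFPtrace : (F * P).trace = (ε * Q).trace := by rw [hεQ1, htrconj]
  have hRpm : Rp - Rm = ε * Q := by rw [hRp, hRm]; module
  calc (ε * NormedSpace.exp ((-t : ℂ) • (D * D))).trace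
      = (U * (F * diagonal (fun i =>
          NormedSpace.exp ((-t : ℂ) * ((lam i : ℂ) * (lam i : ℂ))))) * star U).trace := by
        rw [hexp t, hmain]
  _ = (F * diagonal (fun i =>
        NormedSpace.exp ((-t : ℂ) * ((lam i : ℂ) * (lam i : ℂ))))).trace := htrconj _
  _ = (F * P).trace := hFg
  _ = (ε * Q).trace := hFPtrace
  _ = (Rp - Rm).trace := by rw [hRpm]
  _ = Rp.trace - Rm.trace := Matrix.trace_sub _ _
  _ = ((finrank ℂ Sp : ℕ) : ℂ) - ((finrank ℂ Sm : ℕ) : ℂ) := by rw [htrp, htrm]
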